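/- Let K be an algebraically closed field of characteristic 3 and Λ₂ the nonstandard algebra defined by the quiver with loop α at vertex 1, arrows β: 1 → 2, γ: 2 → 1 and relations α²γ = 0, βα² = 0, γβγ = 0, βγβ = 0, βγ = βαγ, α³ = γβ. Then the linear form Ψ with Ψ(α⁴) = Ψ(βαγ) = Ψ(α³) = 1 and Ψ = 0 on the other basis elements {e₁, α, α², γ, αγ, e₂, β, βα} induces an associative, symmetric, nondegenerate bilinear form (a,b) = Ψ(ab) on Λ₂. -/

import Mathlib

set_option maxHeartbeats 2000000 in


/-- For the nonstandard algebra `Λ₂` (char 3), the linear form `Ψ` with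
`Ψ(α⁴) = Ψ(βαγ) = Ψ(α³) = 1` and `Ψ = 0` on the other basis elements induces an
associative, symmetric, nondegenerate bilinear form `(a,b) = Ψ(ab)`. -/
theorem symmetrizing_form_of_Lambda2
    (K : Type*) [Field K] [IsAlgClosed K] [CharP K 3]
    (Λ : Type*) [Ring Λ] [Algebra K Λ]
    (e1 e2 α β γ : Λ)
    (he1 : e1 * e1 = e1) (he2 : e2 * e2 = e2)
    (h12 : e1 * e2 = 0) (h21 : e2 * e1 = 0) (hsum : e1 + e2 = 1)
    (hα1 : e1 * α = α) (hα2 : α * e1 = α)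
    (hβ1 : e2 * β = β) (hβ2 : β * e1 = β)
    (hγ1 : e1 * γ = γ) (hγ2 : γ * e2 = γ)
    -- relations of the nonstandard algebra Λ₂
    (r1 : α ^ 2 * γ = 0) (r2 : β * α ^ 2 = 0) (r3 : γ * β * γ = 0) (r4 : β * γ * β = 0)
    (r5 : β * γ = β * α * γ) (r6 : α ^ 3 = γ * β)
    (b : Module.Basis (Fin 11) K Λ)
    (hb0 : b 0 = e1) (hb1 : b 1 = α) (hb2 : b 2 = α ^ 2) (hb3 : b 3 = α ^ 3)
    (hb4 : b 4 = α ^ 4) (hb5 : b 5 = γ) (hb6 : b 6 = α * γ) (hb7 : b 7 = e2)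
    (hb8 : b 8 = β) (hb9 : b 9 = β * α) (hb10 : b 10 = β * α * γ) :
    let Ψ : Λ →ₗ[K] K := b.coord 3 + b.coord 4 + b.coord 10
    (∀ a c : Λ, Ψ (a * c) = Ψ (c * a)) ∧
    (∀ a : Λ, (∀ x : Λ, Ψ (a * x) = 0) → a = 0) := by
  intro Ψ
  -- power expansions
  have pA2 : α ^ 2 = α * α := pow_two α
  have pA3 : α ^ 3 = α * (α * α) := by
    rw [show (3:ℕ) = 2+1 from rfl, pow_succ, pA2, mul_assoc]
  have pA4 : α ^ 4 = α * (α * (α * α)) := by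
    rw [show (4:ℕ) = 3+1 from rfl, pow_succ, pA3]
    simp [mul_assoc]
  have hA5 : α ^ 5 = 0 := by
    have h : α ^ 5 = α ^ 2 * α ^ 3 := by
      rw [show (5:ℕ) = 2+3 from rfl, pow_add]
    rw [h, r6, ← mul_assoc, r1, zero_mul]
  have RA5 : α * (α * (α * (α * α))) = 0 := by
    have pA5 : α ^ 5 = α * (α * (α * (α * α))) := by
      rw [show (5:ℕ) = 4+1 from rfl, pow_succ, pA4]
      simp [mul_assoc]
    rw [← pA5, hA5]
  -- vertex zero facts
  have zαe2 : α * e2 = 0 := by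
    have h : α * (e1 + e2) = α := by rw [hsum, mul_one]
    rw [mul_add, hα2] at h
    have h2 : α + α * e2 = α + 0 := by rw [add_zero]; exact h
    exact add_left_cancel h2
  have ze2α : e2 * α = 0 := by
    have h : (e1 + e2) * α = α := by rw [hsum, one_mul]
    rw [add_mul, hα1] at h
    have h2 : α + e2 * α = α + 0 := by rw [add_zero]; exact h
    exact add_left_cancel h2
  have zβe2 : β * e2 = 0 := by
    have h : β * (e1 + e2) = β := by rw [hsum, mul_one]
    rw [mul_add, hβ2] at h
    have h2 : β + β * e2 = β + 0 := by rw [add_zero]; exact h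
    exact add_left_cancel h2
  have zγe1 : γ * e1 = 0 := by
    have h : γ * (e1 + e2) = γ := by rw [hsum, mul_one]
    rw [mul_add, hγ2] at h
    have h2 : γ * e1 + γ = 0 + γ := by rw [zero_add]; exact h
    exact add_right_cancel h2
  have ze1β : e1 * β = 0 := by rw [← hβ1, ← mul_assoc, h12, zero_mul]
  have ze2γ : e2 * γ = 0 := by rw [← hγ1, ← mul_assoc, h21, zero_mul]
  have zαβ : α * β = 0 := by rw [← hβ1, ← mul_assoc, zαe2, zero_mul]
  have zγα : γ * α = 0 := by rw [← hα1, ← mul_assoc, zγe1, zero_mul]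
  have zγγ : γ * γ = 0 := by nth_rewrite 2 [← hγ1]; rw [← mul_assoc, zγe1, zero_mul]
  have zββ : β * β = 0 := by nth_rewrite 2 [← hβ1]; rw [← mul_assoc, zβe2, zero_mul]
  have zβαα : β * (α * α) = 0 := by rw [← pA2]; exact r2
  -- trailing rules
  have te1α : ∀ x : Λ, e1 * (α * x) = α * x := fun x => by rw [← mul_assoc, hα1]
  have te1γ : ∀ x : Λ, e1 * (γ * x) = γ * x := fun x => by rw [← mul_assoc, hγ1]
  have te1β : ∀ x : Λ, e1 * (β * x) = 0 := fun x => by rw [← mul_assoc, ze1β, zero_mul]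
  have tαβ : ∀ x : Λ, α * (β * x) = 0 := fun x => by rw [← mul_assoc, zαβ, zero_mul]
  have tγα : ∀ x : Λ, γ * (α * x) = 0 := fun x => by rw [← mul_assoc, zγα, zero_mul]
  have tγγ : ∀ x : Λ, γ * (γ * x) = 0 := fun x => by rw [← mul_assoc, zγγ, zero_mul]
  have te2α : ∀ x : Λ, e2 * (α * x) = 0 := fun x => by rw [← mul_assoc, ze2α, zero_mul]
  have te2γ : ∀ x : Λ, e2 * (γ * x) = 0 := fun x => by rw [← mul_assoc, ze2γ, zero_mul]
  have te2β : ∀ x : Λ, e2 * (β * x) = β * x := fun x => by rw [← mul_assoc, hβ1]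
  have tββ : ∀ x : Λ, β * (β * x) = 0 := fun x => by rw [← mul_assoc, zββ, zero_mul]
  have tγβ : ∀ x : Λ, γ * (β * x) = α * (α * (α * x)) := by
    intro x
    have h : (γ * β) * x = (α * (α * α)) * x := by rw [← r6, pA3]
    simpa [mul_assoc] using h
  have tβαα : ∀ x : Λ, β * (α * (α * x)) = 0 := by
    intro x
    have h : (β * (α * α)) * x = 0 := by rw [zβαα, zero_mul]
    simpa [mul_assoc] using h
  have tααγ : α * (α * γ) = 0 := by
    have h : (α * α) * γ = 0 := by rw [← pA2]; exact r1
    simpa [mul_assoc] using h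
  have RGB : γ * β = α * (α * α) := by rw [← r6, pA3]
  have RBG : β * γ = β * (α * γ) := by rw [r5, mul_assoc]
  -- letter forms of basis
  have hb2' : b 2 = α * α := by rw [hb2, pA2]
  have hb3' : b 3 = α * (α * α) := by rw [hb3, pA3]
  have hb4' : b 4 = α * (α * (α * α)) := by rw [hb4, pA4]
  have hb10' : b 10 = β * (α * γ) := by rw [hb10, mul_assoc]
  -- Ψ values on basis words
  have Ψap : ∀ x : Λ, Ψ x = b.repr x 3 + b.repr x 4 + b.repr x 10 := fun x => rfl
  have Ψe1 : Ψ e1 = 0 := by rw [← hb0, Ψap]; simp [Finsupp.single_apply]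
  have ΨA : Ψ α = 0 := by rw [← hb1, Ψap]; simp [Finsupp.single_apply]
  have ΨAA : Ψ (α * α) = 0 := by rw [← hb2', Ψap]; simp [Finsupp.single_apply]
  have ΨA3 : Ψ (α * (α * α)) = 1 := by rw [← hb3', Ψap]; simp [Finsupp.single_apply]
  have ΨA4 : Ψ (α * (α * (α * α))) = 1 := by rw [← hb4', Ψap]; simp [Finsupp.single_apply]
  have ΨG : Ψ γ = 0 := by rw [← hb5, Ψap]; simp [Finsupp.single_apply]
  have ΨAG : Ψ (α * γ) = 0 := by rw [← hb6, Ψap]; simp [Finsupp.single_apply]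
  have ΨE2 : Ψ e2 = 0 := by rw [← hb7, Ψap]; simp [Finsupp.single_apply]
  have ΨB : Ψ β = 0 := by rw [← hb8, Ψap]; simp [Finsupp.single_apply]
  have ΨBA : Ψ (β * α) = 0 := by rw [← hb9, Ψap]; simp [Finsupp.single_apply]
  have ΨBAG : Ψ (β * (α * γ)) = 1 := by rw [← hb10', Ψap]; simp [Finsupp.single_apply]
  have m0 : ∀ (h : 0 < 11), b ⟨0, h⟩ = e1 := fun _ => hb0
  have m1 : ∀ (h : 1 < 11), b ⟨1, h⟩ = α := fun _ => hb1
  have m2 : ∀ (h : 2 < 11), b ⟨2, h⟩ = α * α := fun _ => hb2'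
  have m3 : ∀ (h : 3 < 11), b ⟨3, h⟩ = α * (α * α) := fun _ => hb3'
  have m4 : ∀ (h : 4 < 11), b ⟨4, h⟩ = α * (α * (α * α)) := fun _ => hb4'
  have m5 : ∀ (h : 5 < 11), b ⟨5, h⟩ = γ := fun _ => hb5
  have m6 : ∀ (h : 6 < 11), b ⟨6, h⟩ = α * γ := fun _ => hb6
  have m7 : ∀ (h : 7 < 11), b ⟨7, h⟩ = e2 := fun _ => hb7
  have m8 : ∀ (h : 8 < 11), b ⟨8, h⟩ = β := fun _ => hb8
  have m9 : ∀ (h : 9 < 11), b ⟨9, h⟩ = β * α := fun _ => hb9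
  have m10 : ∀ (h : 10 < 11), b ⟨10, h⟩ = β * (α * γ) := fun _ => hb10'
  have key : ∀ i j : Fin 11, Ψ (b i * b j) = Ψ (b j * b i) := by
    intro i j
    fin_cases i <;> fin_cases j <;>
      simp only [m0, m1, m2, m3, m4, m5, m6, m7, m8, m9, m10,
        hb0, hb1, hb2', hb3', hb4', hb5, hb6, hb7, hb8, hb9, hb10',
        mul_assoc, he1, he2, h12, h21, hα1, hα2, hβ1, hβ2, hγ1, hγ2,
        zαe2, ze2α, zβe2, zγe1, ze1β, ze2γ, zαβ, zγα, zγγ, zββ, zβαα,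
        te1α, te1γ, te1β, tαβ, tγα, tγγ, te2α, te2γ, te2β, tββ, tγβ, tβαα,
        tααγ, RGB, RBG, RA5, mul_zero, zero_mul, map_zero,
        Ψe1, ΨA, ΨAA, ΨA3, ΨA4, ΨG, ΨAG, ΨE2, ΨB, ΨBA, ΨBAG]
  have rv0 : b.repr e1 = Finsupp.single 0 1 := by rw [← hb0]; exact b.repr_self 0
  have rv1 : b.repr α = Finsupp.single 1 1 := by rw [← hb1]; exact b.repr_self 1
  have rv2 : b.repr (α * α) = Finsupp.single 2 1 := by rw [← hb2']; exact b.repr_self 2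
  have rv3 : b.repr (α * (α * α)) = Finsupp.single 3 1 := by rw [← hb3']; exact b.repr_self 3
  have rv4 : b.repr (α * (α * (α * α))) = Finsupp.single 4 1 := by rw [← hb4']; exact b.repr_self 4
  have rv5 : b.repr γ = Finsupp.single 5 1 := by rw [← hb5]; exact b.repr_self 5
  have rv6 : b.repr (α * γ) = Finsupp.single 6 1 := by rw [← hb6]; exact b.repr_self 6
  have rv7 : b.repr e2 = Finsupp.single 7 1 := by rw [← hb7]; exact b.repr_self 7
  have rv8 : b.repr β = Finsupp.single 8 1 := by rw [← hb8]; exact b.repr_self 8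
  have rv9 : b.repr (β * α) = Finsupp.single 9 1 := by rw [← hb9]; exact b.repr_self 9
  have rv10 : b.repr (β * (α * γ)) = Finsupp.single 10 1 := by rw [← hb10']; exact b.repr_self 10
  have colF : ∀ (c : Λ) (φ : Λ →ₗ[K] K), (∀ i, Ψ (b i * c) = φ (b i)) →
      ∀ x : Λ, Ψ (x * c) = φ x := by
    intro c φ h x
    have h2 : Ψ.comp (LinearMap.mulRight K c) = φ := b.ext (by simpa using h)
    simpa using LinearMap.congr_fun h2 x
  have col0 : ∀ x : Λ, Ψ (x * b 4) = (b.coord 0) x := colF (b 4) (b.coord 0) (by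
    intro i
    fin_cases i <;>
      simp only [m0, m1, m2, m3, m4, m5, m6, m7, m8, m9, m10,
        hb0, hb1, hb2', hb3', hb4', hb5, hb6, hb7, hb8, hb9, hb10',
        mul_assoc, he1, he2, h12, h21, hα1, hα2, hβ1, hβ2, hγ1, hγ2,
        zαe2, ze2α, zβe2, zγe1, ze1β, ze2γ, zαβ, zγα, zγγ, zββ, zβαα,
        te1α, te1γ, te1β, tαβ, tγα, tγγ, te2α, te2γ, te2β, tββ, tγβ, tβαα,
        tααγ, RGB, RBG, RA5, mul_zero, zero_mul, map_zero,
        Ψe1, ΨA, ΨAA, ΨA3, ΨA4, ΨG, ΨAG, ΨE2, ΨB, ΨBA, ΨBAG] <;>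
      simp [Module.Basis.coord_apply, rv0, rv1, rv2, rv3, rv4, rv5, rv6, rv7, rv8, rv9,
        rv10, Finsupp.single_apply])
  have col1 : ∀ x : Λ, Ψ (x * b 3) = (b.coord 0 + b.coord 1) x := colF (b 3) (b.coord 0 + b.coord 1) (by
    intro i
    fin_cases i <;>
      simp only [m0, m1, m2, m3, m4, m5, m6, m7, m8, m9, m10,
        hb0, hb1, hb2', hb3', hb4', hb5, hb6, hb7, hb8, hb9, hb10',
        mul_assoc, he1, he2, h12, h21, hα1, hα2, hβ1, hβ2, hγ1, hγ2,
        zαe2, ze2α, zβe2, zγe1, ze1β, ze2γ, zαβ, zγα, zγγ, zββ, zβαα,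
        te1α, te1γ, te1β, tαβ, tγα, tγγ, te2α, te2γ, te2β, tββ, tγβ, tβαα,
        tααγ, RGB, RBG, RA5, mul_zero, zero_mul, map_zero,
        Ψe1, ΨA, ΨAA, ΨA3, ΨA4, ΨG, ΨAG, ΨE2, ΨB, ΨBA, ΨBAG] <;>
      simp [Module.Basis.coord_apply, rv0, rv1, rv2, rv3, rv4, rv5, rv6, rv7, rv8, rv9,
        rv10, Finsupp.single_apply])
  have col2 : ∀ x : Λ, Ψ (x * b 2) = (b.coord 1 + b.coord 2) x := colF (b 2) (b.coord 1 + b.coord 2) (by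
    intro i
    fin_cases i <;>
      simp only [m0, m1, m2, m3, m4, m5, m6, m7, m8, m9, m10,
        hb0, hb1, hb2', hb3', hb4', hb5, hb6, hb7, hb8, hb9, hb10',
        mul_assoc, he1, he2, h12, h21, hα1, hα2, hβ1, hβ2, hγ1, hγ2,
        zαe2, ze2α, zβe2, zγe1, ze1β, ze2γ, zαβ, zγα, zγγ, zββ, zβαα,
        te1α, te1γ, te1β, tαβ, tγα, tγγ, te2α, te2γ, te2β, tββ, tγβ, tβαα,
        tααγ, RGB, RBG, RA5, mul_zero, zero_mul, map_zero,
        Ψe1, ΨA, ΨAA, ΨA3, ΨA4, ΨG, ΨAG, ΨE2, ΨB, ΨBA, ΨBAG] <;>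
      simp [Module.Basis.coord_apply, rv0, rv1, rv2, rv3, rv4, rv5, rv6, rv7, rv8, rv9,
        rv10, Finsupp.single_apply])
  have col3 : ∀ x : Λ, Ψ (x * b 1) = (b.coord 2 + b.coord 3) x := colF (b 1) (b.coord 2 + b.coord 3) (by
    intro i
    fin_cases i <;>
      simp only [m0, m1, m2, m3, m4, m5, m6, m7, m8, m9, m10,
        hb0, hb1, hb2', hb3', hb4', hb5, hb6, hb7, hb8, hb9, hb10',
        mul_assoc, he1, he2, h12, h21, hα1, hα2, hβ1, hβ2, hγ1, hγ2,
        zαe2, ze2α, zβe2, zγe1, ze1β, ze2γ, zαβ, zγα, zγγ, zββ, zβαα,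
        te1α, te1γ, te1β, tαβ, tγα, tγγ, te2α, te2γ, te2β, tββ, tγβ, tβαα,
        tααγ, RGB, RBG, RA5, mul_zero, zero_mul, map_zero,
        Ψe1, ΨA, ΨAA, ΨA3, ΨA4, ΨG, ΨAG, ΨE2, ΨB, ΨBA, ΨBAG] <;>
      simp [Module.Basis.coord_apply, rv0, rv1, rv2, rv3, rv4, rv5, rv6, rv7, rv8, rv9,
        rv10, Finsupp.single_apply])
  have col4 : ∀ x : Λ, Ψ (x * b 0) = (b.coord 3 + b.coord 4) x := colF (b 0) (b.coord 3 + b.coord 4) (by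
    intro i
    fin_cases i <;>
      simp only [m0, m1, m2, m3, m4, m5, m6, m7, m8, m9, m10,
        hb0, hb1, hb2', hb3', hb4', hb5, hb6, hb7, hb8, hb9, hb10',
        mul_assoc, he1, he2, h12, h21, hα1, hα2, hβ1, hβ2, hγ1, hγ2,
        zαe2, ze2α, zβe2, zγe1, ze1β, ze2γ, zαβ, zγα, zγγ, zββ, zβαα,
        te1α, te1γ, te1β, tαβ, tγα, tγγ, te2α, te2γ, te2β, tββ, tγβ, tβαα,
        tααγ, RGB, RBG, RA5, mul_zero, zero_mul, map_zero,
        Ψe1, ΨA, ΨAA, ΨA3, ΨA4, ΨG, ΨAG, ΨE2, ΨB, ΨBA, ΨBAG] <;>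
      simp [Module.Basis.coord_apply, rv0, rv1, rv2, rv3, rv4, rv5, rv6, rv7, rv8, rv9,
        rv10, Finsupp.single_apply])
  have col5 : ∀ x : Λ, Ψ (x * b 9) = (b.coord 5) x := colF (b 9) (b.coord 5) (by
    intro i
    fin_cases i <;>
      simp only [m0, m1, m2, m3, m4, m5, m6, m7, m8, m9, m10,
        hb0, hb1, hb2', hb3', hb4', hb5, hb6, hb7, hb8, hb9, hb10',
        mul_assoc, he1, he2, h12, h21, hα1, hα2, hβ1, hβ2, hγ1, hγ2,
        zαe2, ze2α, zβe2, zγe1, ze1β, ze2γ, zαβ, zγα, zγγ, zββ, zβαα,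
        te1α, te1γ, te1β, tαβ, tγα, tγγ, te2α, te2γ, te2β, tββ, tγβ, tβαα,
        tααγ, RGB, RBG, RA5, mul_zero, zero_mul, map_zero,
        Ψe1, ΨA, ΨAA, ΨA3, ΨA4, ΨG, ΨAG, ΨE2, ΨB, ΨBA, ΨBAG] <;>
      simp [Module.Basis.coord_apply, rv0, rv1, rv2, rv3, rv4, rv5, rv6, rv7, rv8, rv9,
        rv10, Finsupp.single_apply])
  have col6 : ∀ x : Λ, Ψ (x * b 8) = (b.coord 5 + b.coord 6) x := colF (b 8) (b.coord 5 + b.coord 6) (by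
    intro i
    fin_cases i <;>
      simp only [m0, m1, m2, m3, m4, m5, m6, m7, m8, m9, m10,
        hb0, hb1, hb2', hb3', hb4', hb5, hb6, hb7, hb8, hb9, hb10',
        mul_assoc, he1, he2, h12, h21, hα1, hα2, hβ1, hβ2, hγ1, hγ2,
        zαe2, ze2α, zβe2, zγe1, ze1β, ze2γ, zαβ, zγα, zγγ, zββ, zβαα,
        te1α, te1γ, te1β, tαβ, tγα, tγγ, te2α, te2γ, te2β, tββ, tγβ, tβαα,
        tααγ, RGB, RBG, RA5, mul_zero, zero_mul, map_zero,
        Ψe1, ΨA, ΨAA, ΨA3, ΨA4, ΨG, ΨAG, ΨE2, ΨB, ΨBA, ΨBAG] <;>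
      simp [Module.Basis.coord_apply, rv0, rv1, rv2, rv3, rv4, rv5, rv6, rv7, rv8, rv9,
        rv10, Finsupp.single_apply])
  have col7 : ∀ x : Λ, Ψ (x * b 10) = (b.coord 7) x := colF (b 10) (b.coord 7) (by
    intro i
    fin_cases i <;>
      simp only [m0, m1, m2, m3, m4, m5, m6, m7, m8, m9, m10,
        hb0, hb1, hb2', hb3', hb4', hb5, hb6, hb7, hb8, hb9, hb10',
        mul_assoc, he1, he2, h12, h21, hα1, hα2, hβ1, hβ2, hγ1, hγ2,
        zαe2, ze2α, zβe2, zγe1, ze1β, ze2γ, zαβ, zγα, zγγ, zββ, zβαα,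
        te1α, te1γ, te1β, tαβ, tγα, tγγ, te2α, te2γ, te2β, tββ, tγβ, tβαα,
        tααγ, RGB, RBG, RA5, mul_zero, zero_mul, map_zero,
        Ψe1, ΨA, ΨAA, ΨA3, ΨA4, ΨG, ΨAG, ΨE2, ΨB, ΨBA, ΨBAG] <;>
      simp [Module.Basis.coord_apply, rv0, rv1, rv2, rv3, rv4, rv5, rv6, rv7, rv8, rv9,
        rv10, Finsupp.single_apply])
  have col8 : ∀ x : Λ, Ψ (x * b 6) = (b.coord 8) x := colF (b 6) (b.coord 8) (by
    intro i
    fin_cases i <;>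
      simp only [m0, m1, m2, m3, m4, m5, m6, m7, m8, m9, m10,
        hb0, hb1, hb2', hb3', hb4', hb5, hb6, hb7, hb8, hb9, hb10',
        mul_assoc, he1, he2, h12, h21, hα1, hα2, hβ1, hβ2, hγ1, hγ2,
        zαe2, ze2α, zβe2, zγe1, ze1β, ze2γ, zαβ, zγα, zγγ, zββ, zβαα,
        te1α, te1γ, te1β, tαβ, tγα, tγγ, te2α, te2γ, te2β, tββ, tγβ, tβαα,
        tααγ, RGB, RBG, RA5, mul_zero, zero_mul, map_zero,
        Ψe1, ΨA, ΨAA, ΨA3, ΨA4, ΨG, ΨAG, ΨE2, ΨB, ΨBA, ΨBAG] <;>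
      simp [Module.Basis.coord_apply, rv0, rv1, rv2, rv3, rv4, rv5, rv6, rv7, rv8, rv9,
        rv10, Finsupp.single_apply])
  have col9 : ∀ x : Λ, Ψ (x * b 5) = (b.coord 8 + b.coord 9) x := colF (b 5) (b.coord 8 + b.coord 9) (by
    intro i
    fin_cases i <;>
      simp only [m0, m1, m2, m3, m4, m5, m6, m7, m8, m9, m10,
        hb0, hb1, hb2', hb3', hb4', hb5, hb6, hb7, hb8, hb9, hb10',
        mul_assoc, he1, he2, h12, h21, hα1, hα2, hβ1, hβ2, hγ1, hγ2,
        zαe2, ze2α, zβe2, zγe1, ze1β, ze2γ, zαβ, zγα, zγγ, zββ, zβαα,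
        te1α, te1γ, te1β, tαβ, tγα, tγγ, te2α, te2γ, te2β, tββ, tγβ, tβαα,
        tααγ, RGB, RBG, RA5, mul_zero, zero_mul, map_zero,
        Ψe1, ΨA, ΨAA, ΨA3, ΨA4, ΨG, ΨAG, ΨE2, ΨB, ΨBA, ΨBAG] <;>
      simp [Module.Basis.coord_apply, rv0, rv1, rv2, rv3, rv4, rv5, rv6, rv7, rv8, rv9,
        rv10, Finsupp.single_apply])
  have col10 : ∀ x : Λ, Ψ (x * b 7) = (b.coord 10) x := colF (b 7) (b.coord 10) (by
    intro i
    fin_cases i <;>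
      simp only [m0, m1, m2, m3, m4, m5, m6, m7, m8, m9, m10,
        hb0, hb1, hb2', hb3', hb4', hb5, hb6, hb7, hb8, hb9, hb10',
        mul_assoc, he1, he2, h12, h21, hα1, hα2, hβ1, hβ2, hγ1, hγ2,
        zαe2, ze2α, zβe2, zγe1, ze1β, ze2γ, zαβ, zγα, zγγ, zββ, zβαα,
        te1α, te1γ, te1β, tαβ, tγα, tγγ, te2α, te2γ, te2β, tββ, tγβ, tβαα,
        tααγ, RGB, RBG, RA5, mul_zero, zero_mul, map_zero,
        Ψe1, ΨA, ΨAA, ΨA3, ΨA4, ΨG, ΨAG, ΨE2, ΨB, ΨBA, ΨBAG] <;>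
      simp [Module.Basis.coord_apply, rv0, rv1, rv2, rv3, rv4, rv5, rv6, rv7, rv8, rv9,
        rv10, Finsupp.single_apply])
  constructor
  · -- symmetry
    have hB : ((LinearMap.mul K Λ).compr₂ Ψ) = ((LinearMap.mul K Λ).compr₂ Ψ).flip :=
      b.ext fun i => b.ext fun j => by simpa using key i j
    intro a c
    simpa using LinearMap.congr_fun (LinearMap.congr_fun hB a) c
  · -- nondegeneracy
    intro a H
    have k0 : b.coord 0 a = 0 := (col0 a).symm.trans (H (b 4))
    have k1 : b.coord 1 a = 0 := by
      have h := (col1 a).symm.trans (H (b 3))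
      simp only [LinearMap.add_apply] at h
      rwa [k0, zero_add] at h
    have k2 : b.coord 2 a = 0 := by
      have h := (col2 a).symm.trans (H (b 2))
      simp only [LinearMap.add_apply] at h
      rwa [k1, zero_add] at h
    have k3 : b.coord 3 a = 0 := by
      have h := (col3 a).symm.trans (H (b 1))
      simp only [LinearMap.add_apply] at h
      rwa [k2, zero_add] at h
    have k4 : b.coord 4 a = 0 := by
      have h := (col4 a).symm.trans (H (b 0))
      simp only [LinearMap.add_apply] at h
      rwa [k3, zero_add] at h
    have k5 : b.coord 5 a = 0 := (col5 a).symm.trans (H (b 9))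
    have k6 : b.coord 6 a = 0 := by
      have h := (col6 a).symm.trans (H (b 8))
      simp only [LinearMap.add_apply] at h
      rwa [k5, zero_add] at h
    have k7 : b.coord 7 a = 0 := (col7 a).symm.trans (H (b 10))
    have k8 : b.coord 8 a = 0 := (col8 a).symm.trans (H (b 6))
    have k9 : b.coord 9 a = 0 := by
      have h := (col9 a).symm.trans (H (b 5))
      simp only [LinearMap.add_apply] at h
      rwa [k8, zero_add] at h
    have k10 : b.coord 10 a = 0 := (col10 a).symm.trans (H (b 7))
    have hrep : ∀ i : Fin 11, b.repr a i = 0 := by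
      intro i
      fin_cases i
      · exact k0
      · exact k1
      · exact k2
      · exact k3
      · exact k4
      · exact k5
      · exact k6
      · exact k7
      · exact k8
      · exact k9
      · exact k10
    exact b.repr.map_eq_zero_iff.mp (Finsupp.ext hrep)
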